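/- The 8×8 Hermitian matrix Ĉ (with entries Ĉ indexed by the computational basis of (ℂ²)^⊗3: diagonal entries 1/3 at positions (1,1),(3,3),(4,4),(5,5),(6,6),(8,8), zeros at (2,2),(7,7), and off-diagonal entries 1/2 at positions (1,4),(1,6),(3,5),(3,8),(4,6),(5,8) and their transposes, all other entries zero) satisfies (U_φ ⊗ U_φ ⊗ conj(U_φ)) Ĉ (U_φ ⊗ U_φ ⊗ conj(U_φ))† = Ĉ for every φ ∈ ℝ, where U_φ = |0⟩⟨0| + e^{iφ}|1⟩⟨1|. -/
import Mathlib


open Matrix Complex Kronecker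

noncomputable section

noncomputable def Chat8 : Matrix (Fin 8) (Fin 8) ℂ :=
  !![1/3, 0, 0, 1/2, 0, 1/2, 0, 0;
     0, 0, 0, 0, 0, 0, 0, 0;
     0, 0, 1/3, 0, 1/2, 0, 0, 1/2;
     1/2, 0, 0, 1/3, 0, 1/2, 0, 0;
     0, 0, 1/2, 0, 1/3, 0, 0, 1/2;
     1/2, 0, 0, 1/2, 0, 1/3, 0, 0;
     0, 0, 0, 0, 0, 0, 0, 0;
     0, 0, 1/2, 0, 1/2, 0, 0, 1/3]

/-- Encoding of a bit triple `((a,b),c)` as an index in `Fin 8` (`c` = input bit). -/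
def enc : (Fin 2 × Fin 2) × Fin 2 → Fin 8 :=
  fun p => ⟨4 * p.1.1.val + 2 * p.1.2.val + p.2.val,
    by have := p.1.1.isLt; have := p.1.2.isLt; have := p.2.isLt; omega⟩

/-- The Choi operator `Ĉ`, viewed as an operator on `ℂ² ⊗ ℂ² ⊗ ℂ²`. -/
noncomputable def ChatT : Matrix ((Fin 2 × Fin 2) × Fin 2) ((Fin 2 × Fin 2) × Fin 2) ℂ :=
  Matrix.of fun i j => Chat8 (enc i) (enc j)

/-- The phase unitary `U_φ = |0⟩⟨0| + e^{iφ}|1⟩⟨1|`. -/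
noncomputable def U (φ : ℝ) : Matrix (Fin 2) (Fin 2) ℂ :=
  !![1, 0; 0, Complex.exp (φ * Complex.I)]

lemma U_eq_diagonal (φ : ℝ) :
    U φ = Matrix.diagonal (fun i : Fin 2 => if i = 0 then 1 else Complex.exp (φ * Complex.I)) := by
  ext i j
  fin_cases i <;> fin_cases j <;> simp [U, Matrix.diagonal]

lemma exp_mul_star (φ : ℝ) :
    Complex.exp (φ * Complex.I) * star (Complex.exp (φ * Complex.I)) = 1 := by
  rw [show star (Complex.exp (↑φ * Complex.I)) = Complex.exp (-(↑φ * Complex.I)) by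
    rw [Complex.star_def, ← Complex.exp_conj]; congr 1; simp,
    ← Complex.exp_add]
  simp

set_option maxHeartbeats 1000000 in
/-- `Ĉ` is invariant under conjugation by `U_φ ⊗ U_φ ⊗ conj(U_φ)` for every phase `φ`. -/
theorem phase_covariance_of_Chat (φ : ℝ) :
    ((U φ ⊗ₖ U φ) ⊗ₖ (U φ).map star) * ChatT *
      ((U φ ⊗ₖ U φ) ⊗ₖ (U φ).map star)ᴴ = ChatT := by
  set e := Complex.exp (φ * Complex.I) with he
  set d : (Fin 2 × Fin 2) × Fin 2 → ℂ := fun p =>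
    (if p.1.1 = 0 then 1 else e) * (if p.1.2 = 0 then 1 else e) *
      (if p.2 = 0 then 1 else star e) with hd
  have hdiag : (U φ ⊗ₖ U φ) ⊗ₖ (U φ).map star = Matrix.diagonal d := by
    rw [U_eq_diagonal, Matrix.diagonal_map (by simp), Matrix.diagonal_kronecker_diagonal,
      Matrix.diagonal_kronecker_diagonal]
    refine congrArg Matrix.diagonal (funext fun p => ?_)
    obtain ⟨⟨a, b⟩, c⟩ := p
    fin_cases a <;> fin_cases b <;> fin_cases c <;> simp [hd, he, mul_comm, mul_left_comm]
  have h1 : e * star e = 1 := exp_mul_star φ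
  have h2 : star e * e = 1 := by rw [mul_comm]; exact h1
  have h1' : e * (starRingEnd ℂ) e = 1 := h1
  have h2' : (starRingEnd ℂ) e * e = 1 := h2
  have h3 : e ^ 2 * (starRingEnd ℂ) e ^ 2 = 1 := by rw [← mul_pow, h1', one_pow]
  have h4 : e ^ 3 * (starRingEnd ℂ) e ^ 3 = 1 := by rw [← mul_pow, h1', one_pow]
  have key : ∀ i j, ChatT i j = 0 ∨ d i * star (d j) = 1 := by
    rintro ⟨⟨a, b⟩, c⟩ ⟨⟨a', b'⟩, c'⟩
    fin_cases a <;> fin_cases b <;> fin_cases c <;> fin_cases a' <;> fin_cases b' <;>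
      fin_cases c' <;>
      first
        | exact Or.inl rfl
        | (right
           simp only [hd, Fin.mk_one, Fin.mk_zero, if_true, if_false, one_ne_zero,
             Fin.one_eq_zero_iff, ite_true, ite_false, reduceIte, one_mul, mul_one,
             StarMul.star_mul, star_star, star_one]
           try first
             | rfl
             | (ring_nf
                simp [mul_assoc, mul_comm, mul_left_comm, h1, h2, h1', h2', h3, h4]))
  rw [hdiag, Matrix.diagonal_conjTranspose]
  ext i j
  rw [Matrix.mul_diagonal, Matrix.diagonal_mul, Pi.star_apply]
  rcases key i j with h | h
  · rw [h, mul_zero, zero_mul]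
  · rw [mul_comm (d i) (ChatT i j), mul_assoc, h, mul_one]

end
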